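/- Let C be an n×n real matrix, X^0 ∈ Δ interior, and α_k > 0 for all k. Then for every K ≥ 0: X^{K+1}·CX̄^K − (1/A_K) ∑_{k=0}^K α_k X^k·CX^k ≥ RE(X^{K+1}, X^0)/A_K ≥ 0. -/

import Mathlib

open Filter Topology Finset Matrix

noncomputable section

/-- Membership in the probability simplex Δ ⊆ ℝ^n. -/
def isSimplex {n : ℕ} (X : Fin n → ℝ) : Prop :=
  (∀ i, 0 ≤ X i) ∧ ∑ i, X i = 1

/-- Interior point of the probability simplex. -/
def isInteriorPt {n : ℕ} (X : Fin n → ℝ) : Prop :=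
  (∀ i, 0 < X i) ∧ ∑ i, X i = 1

/-- The Hedge map T_α. -/
noncomputable def hedge {n : ℕ} (C : Matrix (Fin n) (Fin n) ℝ) (a : ℝ) (X : Fin n → ℝ) :
    Fin n → ℝ :=
  fun i => X i * Real.exp (a * C.mulVec X i) / ∑ j, X j * Real.exp (a * C.mulVec X j)

/-- Hedge iterates: X^0 = X0, X^{k+1} = T_{α_k}(X^k). -/
noncomputable def hiter {n : ℕ} (C : Matrix (Fin n) (Fin n) ℝ) (a : ℕ → ℝ) (X0 : Fin n → ℝ) :
    ℕ → Fin n → ℝ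
  | 0 => X0
  | k + 1 => hedge C (a k) (hiter C a X0 k)

/-- A_K = ∑_{k=0}^K α_k. -/
noncomputable def pSum (a : ℕ → ℝ) (K : ℕ) : ℝ := ∑ k ∈ Finset.range (K + 1), a k

/-- Weighted empirical average X̄^K = (1/A_K) ∑_{k=0}^K α_k X^k. -/
noncomputable def wavg {n : ℕ} (C : Matrix (Fin n) (Fin n) ℝ) (a : ℕ → ℝ) (X0 : Fin n → ℝ)
    (K : ℕ) : Fin n → ℝ :=
  (pSum a K)⁻¹ • ∑ k ∈ Finset.range (K + 1), a k • hiter C a X0 k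

/-- Relative entropy RE(Y, X) = ∑_{i : Y(i) > 0} Y(i) ln(Y(i)/X(i)). -/
noncomputable def RE {n : ℕ} (Y X : Fin n → ℝ) : ℝ :=
  ∑ i ∈ Finset.univ.filter (fun i => 0 < Y i), Y i * Real.log (Y i / X i)

/-- (CX)_max = max_i (CX)_i. -/
noncomputable def cmax {n : ℕ} (C : Matrix (Fin n) (Fin n) ℝ) (X : Fin n → ℝ) : ℝ :=
  ⨆ i, C.mulVec X i

/-- X̄ is a limit point of the sequence of weighted empirical averages. -/
def isLimitPoint {n : ℕ} (C : Matrix (Fin n) (Fin n) ℝ) (a : ℕ → ℝ) (X0 : Fin n → ℝ)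
    (Xb : Fin n → ℝ) : Prop :=
  ∃ φ : ℕ → ℕ, StrictMono φ ∧ Tendsto (fun j => wavg C a X0 (φ j)) atTop (𝓝 Xb)

section Aux

variable {n : ℕ}

lemma simplex_nonempty {X : Fin n → ℝ} (hX : isInteriorPt X) : Nonempty (Fin n) := by
  by_contra h
  have : ∑ i, X i = 0 := by
    rw [Finset.sum_eq_zero]; intro i _; exact absurd ⟨i⟩ h
  rw [hX.2] at this; norm_num at this

lemma Zpos (C : Matrix (Fin n) (Fin n) ℝ) (α : ℝ) {X : Fin n → ℝ} (hX : isInteriorPt X) :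
    0 < ∑ j, X j * Real.exp (α * C.mulVec X j) := by
  have := simplex_nonempty hX
  exact Finset.sum_pos (fun j _ => mul_pos (hX.1 j) (Real.exp_pos _)) Finset.univ_nonempty

lemma hedge_interior (C : Matrix (Fin n) (Fin n) ℝ) (α : ℝ) {X : Fin n → ℝ}
    (hX : isInteriorPt X) : isInteriorPt (hedge C α X) := by
  have hZ := Zpos C α hX
  refine ⟨fun i => div_pos (mul_pos (hX.1 i) (Real.exp_pos _)) hZ, ?_⟩
  unfold hedge
  rw [← Finset.sum_div, div_self hZ.ne']

lemma hiter_interior (C : Matrix (Fin n) (Fin n) ℝ) (a : ℕ → ℝ) {X0 : Fin n → ℝ}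
    (hX0 : isInteriorPt X0) : ∀ k, isInteriorPt (hiter C a X0 k)
  | 0 => hX0
  | k + 1 => hedge_interior C (a k) (hiter_interior C a hX0 k)

lemma log_hedge (C : Matrix (Fin n) (Fin n) ℝ) (α : ℝ) {X : Fin n → ℝ}
    (hX : isInteriorPt X) (i : Fin n) :
    Real.log (hedge C α X i) =
      Real.log (X i) + α * C.mulVec X i -
        Real.log (∑ j, X j * Real.exp (α * C.mulVec X j)) := by
  have hZ := Zpos C α hX
  unfold hedge
  rw [Real.log_div (mul_pos (hX.1 i) (Real.exp_pos _)).ne' hZ.ne', Real.log_mul (hX.1 i).ne' (Real.exp_pos _).ne',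
    Real.log_exp]

lemma jensen_logZ (C : Matrix (Fin n) (Fin n) ℝ) (α : ℝ) {X : Fin n → ℝ}
    (hX : isInteriorPt X) :
    α * (X ⬝ᵥ C.mulVec X) ≤ Real.log (∑ j, X j * Real.exp (α * C.mulVec X j)) := by
  have hZ := Zpos C α hX
  have hj := convexOn_exp.map_sum_le (t := Finset.univ) (p := fun j => α * C.mulVec X j)
    (w := X) (fun i _ => (hX.1 i).le) hX.2 (fun i _ => Set.mem_univ _)
  simp only [smul_eq_mul] at hj
  have h1 : ∑ j, X j * (α * C.mulVec X j) = α * (X ⬝ᵥ C.mulVec X) := by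
    rw [dotProduct, Finset.mul_sum]
    exact Finset.sum_congr rfl fun i _ => by ring
  calc α * (X ⬝ᵥ C.mulVec X) = Real.log (Real.exp (∑ j, X j * (α * C.mulVec X j))) := by
        rw [Real.log_exp, h1]
    _ ≤ Real.log (∑ j, X j * Real.exp (α * C.mulVec X j)) :=
        Real.log_le_log (Real.exp_pos _) hj

lemma RE_nonneg {Y X : Fin n → ℝ} (hY : isInteriorPt Y) (hX : isInteriorPt X) :
    0 ≤ RE Y X := by
  unfold RE
  rw [Finset.filter_true_of_mem (fun i _ => hY.1 i)]
  have key : ∀ i ∈ Finset.univ, Y i - X i ≤ Y i * Real.log (Y i / X i) := by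
    intro i _
    have h1 : Real.log (X i / Y i) ≤ X i / Y i - 1 :=
      Real.log_le_sub_one_of_pos (div_pos (hX.1 i) (hY.1 i))
    have h2 : Y i * Real.log (X i / Y i) ≤ Y i * (X i / Y i - 1) :=
      mul_le_mul_of_nonneg_left h1 (hY.1 i).le
    have h3 : Real.log (Y i / X i) = - Real.log (X i / Y i) := by
      rw [← Real.log_inv]; congr 1; field_simp
    rw [h3, mul_neg, le_neg]
    calc Y i * Real.log (X i / Y i) ≤ Y i * (X i / Y i - 1) := h2
      _ = -(Y i - X i) := by field_simp [(hY.1 i).ne']; ring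
  calc (0 : ℝ) = ∑ i, (Y i - X i) := by rw [Finset.sum_sub_distrib, hY.2, hX.2]; ring
    _ ≤ _ := Finset.sum_le_sum key

end Aux

/-- X^{K+1}·CX̄^K − (1/A_K) ∑ α_k X^k·CX^k ≥ RE(X^{K+1}, X^0)/A_K ≥ 0. -/
theorem stmt16 {n : ℕ} (C : Matrix (Fin n) (Fin n) ℝ)
    (a : ℕ → ℝ) (hapos : ∀ k, 0 < a k)
    (X0 : Fin n → ℝ) (hX0 : isInteriorPt X0) (K : ℕ) :
    0 ≤ RE (hiter C a X0 (K + 1)) X0 / pSum a K ∧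
    RE (hiter C a X0 (K + 1)) X0 / pSum a K ≤
      hiter C a X0 (K + 1) ⬝ᵥ C.mulVec (wavg C a X0 K) -
        (pSum a K)⁻¹ * ∑ k ∈ Finset.range (K + 1),
          a k * (hiter C a X0 k ⬝ᵥ C.mulVec (hiter C a X0 k)) := by
  have hY := hiter_interior C a hX0 (K + 1)
  have hA : 0 < pSum a K :=
    Finset.sum_pos (fun k _ => hapos k) Finset.nonempty_range_add_one
  set L : ℕ → ℝ := fun k =>
    Real.log (∑ j, hiter C a X0 k j * Real.exp (a k * C.mulVec (hiter C a X0 k) j)) with hLdef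
  -- telescoping log identity
  have hlog : ∀ m i, Real.log (hiter C a X0 m i) = Real.log (X0 i) +
      ∑ k ∈ Finset.range m, (a k * C.mulVec (hiter C a X0 k) i - L k) := by
    intro m
    induction m with
    | zero => intro i; simp [hiter]
    | succ m ih =>
      intro i
      have h := log_hedge C (a m) (hiter_interior C a hX0 m) i
      show Real.log (hedge C (a m) (hiter C a X0 m) i) = _
      rw [h, ih i, Finset.sum_range_succ]
      ring
  -- RE formula
  have hRE : RE (hiter C a X0 (K + 1)) X0 =
      (∑ k ∈ Finset.range (K + 1),
        a k * (hiter C a X0 (K + 1) ⬝ᵥ C.mulVec (hiter C a X0 k))) -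
      ∑ k ∈ Finset.range (K + 1), L k := by
    unfold RE
    rw [Finset.filter_true_of_mem (fun i _ => hY.1 i)]
    have hli : ∀ i, Real.log (hiter C a X0 (K + 1) i / X0 i) =
        ∑ k ∈ Finset.range (K + 1), (a k * C.mulVec (hiter C a X0 k) i - L k) := by
      intro i
      rw [Real.log_div (hY.1 i).ne' (hX0.1 i).ne', hlog (K + 1) i]
      ring
    simp_rw [hli, Finset.mul_sum, mul_sub]
    rw [Finset.sum_comm]
    simp_rw [Finset.sum_sub_distrib]
    congr 1
    · apply Finset.sum_congr rfl
      intro k _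
      rw [dotProduct, Finset.mul_sum]
      apply Finset.sum_congr rfl
      intro i _
      ring
    · apply Finset.sum_congr rfl
      intro k _
      rw [← Finset.sum_mul, hY.2, one_mul]
  -- dot product with the weighted average
  have hdot : hiter C a X0 (K + 1) ⬝ᵥ C.mulVec (wavg C a X0 K) =
      (pSum a K)⁻¹ * ∑ k ∈ Finset.range (K + 1),
        a k * (hiter C a X0 (K + 1) ⬝ᵥ C.mulVec (hiter C a X0 k)) := by
    have hmv : C.mulVec (wavg C a X0 K) = (pSum a K)⁻¹ •
        ∑ k ∈ Finset.range (K + 1), a k • C.mulVec (hiter C a X0 k) := by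
      unfold wavg
      rw [Matrix.mulVec_smul]
      congr 1
      rw [← Matrix.mulVecLin_apply, map_sum]
      apply Finset.sum_congr rfl
      intro k _
      rw [_root_.map_smul, Matrix.mulVecLin_apply]
    rw [hmv, dotProduct_smul, smul_eq_mul]
    congr 1
    rw [dotProduct]
    simp_rw [Finset.sum_apply, Pi.smul_apply, smul_eq_mul, Finset.mul_sum]
    rw [Finset.sum_comm]
    apply Finset.sum_congr rfl
    intro k _
    rw [dotProduct, Finset.mul_sum]
    exact Finset.sum_congr rfl fun i _ => by ring
  have hJ : ∀ k, a k * (hiter C a X0 k ⬝ᵥ C.mulVec (hiter C a X0 k)) ≤ L k :=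
    fun k => jensen_logZ C (a k) (hiter_interior C a hX0 k)
  constructor
  · exact div_nonneg (RE_nonneg hY hX0) hA.le
  · rw [hdot, hRE, div_eq_inv_mul, ← mul_sub]
    apply mul_le_mul_of_nonneg_left _ (inv_nonneg.2 hA.le)
    have := Finset.sum_le_sum (fun k _ => hJ k) (s := Finset.range (K + 1))
    linarith
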